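/- The finite linear span of the functions x ↦ 1/(x − ω), with ω ranging over ℂ \ ℝ, is dense in C₀(ℝ) with respect to the supremum norm. -/

import Mathlib

open Set ZeroAtInfty Filter Topology OnePoint

namespace Stmt13Aux

noncomputable def res (ω : ℂ) (hω : ω.im ≠ 0) : C₀(ℝ, ℂ) where
  toFun := fun x : ℝ => ((x:ℂ) - ω)⁻¹
  continuous_toFun := by
    apply Continuous.inv₀ (Complex.continuous_ofReal.sub continuous_const)
    intro x h
    exact hω (by simpa using (congrArg Complex.im h).symm)
  zero_at_infty' := by
    have hiso : Isometry (fun x : ℝ => (x:ℂ) - ω) := by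
      have : Isometry (fun z : ℂ => z - ω) := fun a b => by simp [dist_eq_norm]
      exact this.comp Complex.isometry_ofReal
    have h2 : Tendsto Inv.inv (Bornology.cobounded ℂ) (𝓝 (0:ℂ)) := tendsto_inv₀_cobounded
    rw [Metric.cobounded_eq_cocompact] at h2
    exact h2.comp hiso.isClosedEmbedding.tendsto_cocompact

@[simp] lemma res_apply (ω : ℂ) (hω : ω.im ≠ 0) (x : ℝ) : res ω hω x = ((x:ℂ) - ω)⁻¹ := rfl

lemma sub_ne_zero' (ω : ℂ) (hω : ω.im ≠ 0) (x : ℝ) : (x:ℂ) - ω ≠ 0 := by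
  intro h
  exact hω (by simpa using (congrArg Complex.im h).symm)

def SS : Set C₀(ℝ, ℂ) :=
  {g : C₀(ℝ, ℂ) | ∃ ω : ℂ, ω.im ≠ 0 ∧ ∀ x : ℝ, g x = ((x : ℂ) - ω)⁻¹}

lemma res_mem (ω : ℂ) (hω : ω.im ≠ 0) : res ω hω ∈ SS := ⟨ω, hω, fun _ => rfl⟩

lemma mem_SS (g : C₀(ℝ, ℂ)) (hg : g ∈ SS) : ∃ ω : ℂ, ∃ hω : ω.im ≠ 0, g = res ω hω := by
  obtain ⟨ω, hω, h⟩ := hg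
  exact ⟨ω, hω, ZeroAtInftyContinuousMap.ext h⟩

lemma norm_res_le (ω : ℂ) (hω : ω.im ≠ 0) : ‖res ω hω‖ ≤ |ω.im|⁻¹ := by
  rw [← ZeroAtInftyContinuousMap.norm_toBCF_eq_norm]
  refine (BoundedContinuousFunction.norm_le (by positivity)).2 fun x => ?_
  show ‖((x:ℂ) - ω)⁻¹‖ ≤ |ω.im|⁻¹
  rw [norm_inv]
  apply inv_anti₀ (abs_pos.2 hω)
  calc |ω.im| = |((x:ℂ) - ω).im| := by simp
    _ ≤ ‖(x:ℂ) - ω‖ := Complex.abs_im_le_norm _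

noncomputable def V : Submodule ℂ C₀(ℝ, ℂ) := (Submodule.span ℂ SS).topologicalClosure

lemma star_res (ω : ℂ) (hω : ω.im ≠ 0) :
    star (res ω hω) = res (starRingEnd ℂ ω) (by simpa using hω) := by
  ext x
  show star (((x:ℂ) - ω)⁻¹) = ((x:ℂ) - starRingEnd ℂ ω)⁻¹
  simp [Complex.star_def, map_inv₀, map_sub, Complex.conj_ofReal]

lemma res_sub_res (ω μ : ℂ) (hω : ω.im ≠ 0) (hμ : μ.im ≠ 0) :
    res ω hω - res μ hμ = (ω - μ) • (res ω hω * res μ hμ) := by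
  ext x
  show ((x:ℂ) - ω)⁻¹ - ((x:ℂ) - μ)⁻¹ = (ω - μ) * (((x:ℂ) - ω)⁻¹ * ((x:ℂ) - μ)⁻¹)
  have h1 := sub_ne_zero' ω hω x
  have h2 := sub_ne_zero' μ hμ x
  field_simp
  ring

lemma res_mul_res (ω μ : ℂ) (hω : ω.im ≠ 0) (hμ : μ.im ≠ 0) (hne : ω ≠ μ) :
    res ω hω * res μ hμ = (ω - μ)⁻¹ • (res ω hω - res μ hμ) := by
  rw [res_sub_res ω μ hω hμ, smul_smul, inv_mul_cancel₀ (sub_ne_zero.mpr hne), one_smul]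

lemma res_mul_res_mem (ω μ : ℂ) (hω : ω.im ≠ 0) (hμ : μ.im ≠ 0) (hne : ω ≠ μ) :
    res ω hω * res μ hμ ∈ Submodule.span ℂ SS := by
  rw [res_mul_res ω μ hω hμ hne]
  exact Submodule.smul_mem _ _ (Submodule.sub_mem _
    (Submodule.subset_span (res_mem ω hω)) (Submodule.subset_span (res_mem μ hμ)))

lemma res_sq_mem (ω : ℂ) (hω : ω.im ≠ 0) : res ω hω * res ω hω ∈ V := by
  have : res ω hω * res ω hω ∈ closure ((Submodule.span ℂ SS : Submodule ℂ C₀(ℝ,ℂ)) : Set C₀(ℝ,ℂ)) := by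
    rw [Metric.mem_closure_iff]
    intro ε hε
    set t : ℝ := ε * |ω.im| ^ 3 / 2 with ht_def
    have ht : 0 < t := by positivity
    have hμ : (ω + (t:ℂ)).im ≠ 0 := by simpa using hω
    have hne : ω ≠ ω + (t:ℂ) := by
      simp only [ne_eq, left_eq_add]
      exact_mod_cast ht.ne'
    refine ⟨res ω hω * res (ω + t) hμ, res_mul_res_mem ω _ hω hμ hne, ?_⟩
    rw [dist_eq_norm]
    have key : res ω hω * res ω hω - res ω hω * res (ω + t) hμ
        = (ω - (ω + t)) • (res ω hω * (res ω hω * res (ω + t) hμ)) := by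
      rw [← mul_sub, res_sub_res ω _ hω hμ, mul_smul_comm]
    rw [key]
    have hnorm : ‖ω - (ω + (t:ℂ))‖ = t := by simp [abs_of_pos ht]
    have hle : ‖(ω - (ω + (t:ℂ))) • (res ω hω * (res ω hω * res (ω + t) hμ))‖
        ≤ t * ‖res ω hω * (res ω hω * res (ω + t) hμ)‖ := by
      refine (norm_smul_le (ω - (ω + (t:ℂ))) (res ω hω * (res ω hω * res (ω + t) hμ))).trans (le_of_eq ?_)
      rw [hnorm]
    refine hle.trans_lt ?_
    have hb : ‖res ω hω * (res ω hω * res (ω + t) hμ)‖ ≤ |ω.im|⁻¹ * (|ω.im|⁻¹ * |ω.im|⁻¹) := by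
      refine (norm_mul_le _ _).trans ?_
      have h1 := norm_res_le ω hω
      have h2 : ‖res ω hω * res (ω + t) hμ‖ ≤ |ω.im|⁻¹ * |ω.im|⁻¹ := by
        refine (norm_mul_le _ _).trans ?_
        have := norm_res_le (ω + t) hμ
        simp only [Complex.add_im, Complex.ofReal_im, add_zero] at this
        exact mul_le_mul h1 this (norm_nonneg _) (by positivity)
      exact mul_le_mul h1 h2 (norm_nonneg _) (by positivity)
    calc t * ‖res ω hω * (res ω hω * res (ω + t) hμ)‖
        ≤ t * (|ω.im|⁻¹ * (|ω.im|⁻¹ * |ω.im|⁻¹)) := by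
          exact mul_le_mul_of_nonneg_left hb ht.le
      _ = ε / 2 := by
          rw [ht_def]
          have h3 : |ω.im| ≠ 0 := abs_ne_zero.2 hω
          field_simp
      _ < ε := by linarith
  exact this

lemma star_mem_V (f : C₀(ℝ, ℂ)) (hf : f ∈ V) : star f ∈ V := by
  have hspan : ∀ g ∈ Submodule.span ℂ SS, star g ∈ Submodule.span ℂ SS := by
    intro g hg
    induction hg using Submodule.span_induction with
    | mem g hg =>
        obtain ⟨ω, hω, rfl⟩ := mem_SS g hg
        rw [star_res]
        exact Submodule.subset_span (res_mem _ _)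
    | zero => simpa using Submodule.zero_mem _
    | add x y _ _ hx hy => rw [star_add]; exact Submodule.add_mem _ hx hy
    | smul c x _ hx =>
        rw [star_smul]
        exact Submodule.smul_mem _ _ hx
  have : star f ∈ closure ((Submodule.span ℂ SS : Submodule ℂ C₀(ℝ,ℂ)) : Set C₀(ℝ,ℂ)) := by
    refine map_mem_closure continuous_star hf ?_
    intro g hg
    exact hspan g hg
  exact this

lemma mul_mem_V (f g : C₀(ℝ, ℂ)) (hf : f ∈ V) (hg : g ∈ V) : f * g ∈ V := by
  have step0 : ∀ a ∈ Submodule.span ℂ SS, ∀ b ∈ Submodule.span ℂ SS, a * b ∈ V := by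
    intro a ha b hb
    induction ha using Submodule.span_induction with
    | mem a ha =>
        induction hb using Submodule.span_induction with
        | mem b hb =>
            obtain ⟨ω, hω, rfl⟩ := mem_SS a ha
            obtain ⟨μ, hμ, rfl⟩ := mem_SS b hb
            by_cases hne : ω = μ
            · subst hne
              have := res_sq_mem ω hω
              convert this using 2
            · exact Submodule.le_topologicalClosure _ (res_mul_res_mem ω μ hω hμ hne)
        | zero => simpa using Submodule.zero_mem V
        | add x y hx' hy' hx hy => rw [mul_add]; exact Submodule.add_mem _ hx hy
        | smul c x hx' hx => rw [mul_smul_comm]; exact Submodule.smul_mem _ _ hx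
    | zero => simpa using Submodule.zero_mem V
    | add x y hx' hy' hx hy => rw [add_mul]; exact Submodule.add_mem _ hx hy
    | smul c x hx' hx => rw [smul_mul_assoc]; exact Submodule.smul_mem _ _ hx
  -- extend to closure in first argument
  have step1 : ∀ a ∈ V, ∀ b ∈ Submodule.span ℂ SS, a * b ∈ V := by
    intro a ha b hb
    have h := map_mem_closure (f := fun x => x * b) (t := (V : Set C₀(ℝ,ℂ)))
      (continuous_mul_right b) ha (fun x hx => step0 x hx b hb)
    have hc : IsClosed (V : Set C₀(ℝ,ℂ)) := Submodule.isClosed_topologicalClosure _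
    rwa [hc.closure_eq] at h
  have h := map_mem_closure (f := fun x => f * x) (t := (V : Set C₀(ℝ,ℂ)))
    (continuous_mul_left f) hg (fun x hx => step1 f hf x hx)
  have hc : IsClosed (V : Set C₀(ℝ,ℂ)) := Submodule.isClosed_topologicalClosure _
  rwa [hc.closure_eq] at h

noncomputable def ext' (f : C₀(ℝ, ℂ)) : C(OnePoint ℝ, ℂ) :=
  OnePoint.continuousMapMk f.toContinuousMap 0
    (by rw [coclosedCompact_eq_cocompact]; exact zero_at_infty f)

@[simp] lemma ext'_coe (f : C₀(ℝ, ℂ)) (x : ℝ) : ext' f x = f x := rfl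
@[simp] lemma ext'_infty (f : C₀(ℝ, ℂ)) : ext' f ∞ = 0 := rfl

noncomputable def Rmap (a : C(OnePoint ℝ, ℂ)) : C₀(ℝ, ℂ) where
  toFun := fun x : ℝ => a x - a ∞
  continuous_toFun := (a.continuous.comp OnePoint.continuous_coe).sub continuous_const
  zero_at_infty' := by
    have h : Tendsto (fun x : ℝ => a ↑x) (cocompact ℝ) (𝓝 (a ∞)) := by
      have h2 := a.continuous.continuousAt (x := (∞ : OnePoint ℝ))
      rw [OnePoint.continuousAt_infty', coclosedCompact_eq_cocompact] at h2
      exact h2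
    simpa using h.sub (tendsto_const_nhds (x := a ∞))

@[simp] lemma Rmap_apply (a : C(OnePoint ℝ, ℂ)) (x : ℝ) : Rmap a x = a x - a ∞ := rfl

lemma Rmap_add (a b : C(OnePoint ℝ, ℂ)) : Rmap (a + b) = Rmap a + Rmap b := by
  ext x; simp [Rmap]; ring

lemma Rmap_algebraMap (c : ℂ) : Rmap (algebraMap ℂ C(OnePoint ℝ, ℂ) c) = 0 := by
  ext x; simp [Rmap]

lemma Rmap_mul (a b : C(OnePoint ℝ, ℂ)) :
    Rmap (a * b) = Rmap a * Rmap b + (b ∞) • Rmap a + (a ∞) • Rmap b := by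
  ext x
  simp [Rmap]
  ring

lemma Rmap_star (a : C(OnePoint ℝ, ℂ)) : Rmap (star a) = star (Rmap a) := by
  ext x
  simp [Rmap]

lemma Rmap_ext' (f : C₀(ℝ, ℂ)) : Rmap (ext' f) = f := by
  ext x; simp

lemma rmem (a : C(OnePoint ℝ, ℂ))
    (ha : a ∈ StarAlgebra.adjoin ℂ {ext' (res Complex.I (by simp))}) : Rmap a ∈ V := by
  induction ha using StarAlgebra.adjoin_induction with
  | mem x hx =>
      rw [Set.mem_singleton_iff] at hx; subst hx
      rw [Rmap_ext']
      exact Submodule.le_topologicalClosure _ (Submodule.subset_span (res_mem _ _))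
  | algebraMap r => rw [Rmap_algebraMap]; exact Submodule.zero_mem _
  | add x y hx hy ihx ihy => rw [Rmap_add]; exact Submodule.add_mem _ ihx ihy
  | mul x y hx hy ihx ihy =>
      rw [Rmap_mul]
      exact Submodule.add_mem _ (Submodule.add_mem _ (mul_mem_V _ _ ihx ihy)
        (Submodule.smul_mem _ _ ihx)) (Submodule.smul_mem _ _ ihy)
  | star x hx ihx => rw [Rmap_star]; exact star_mem_V _ ihx

lemma ext'_res_injective : Function.Injective (ext' (res Complex.I (by simp))) := by
  intro p q h
  induction p using OnePoint.rec with
  | infty =>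
    induction q using OnePoint.rec with
    | infty => rfl
    | coe y =>
      exfalso
      rw [ext'_infty, ext'_coe] at h
      change (0:ℂ) = ((y:ℂ) - Complex.I)⁻¹ at h
      exact inv_ne_zero (sub_ne_zero' Complex.I (by simp) y) h.symm
  | coe x =>
    induction q using OnePoint.rec with
    | infty =>
      exfalso
      rw [ext'_infty, ext'_coe] at h
      change ((x:ℂ) - Complex.I)⁻¹ = (0:ℂ) at h
      exact inv_ne_zero (sub_ne_zero' Complex.I (by simp) x) h
    | coe y =>
      rw [ext'_coe, ext'_coe] at h
      change ((x:ℂ) - Complex.I)⁻¹ = ((y:ℂ) - Complex.I)⁻¹ at h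
      have h2 := inv_injective h
      have hx : (x:ℂ) = y := by linear_combination h2
      norm_cast at hx
      rw [hx]

lemma all_mem_V (f : C₀(ℝ, ℂ)) : f ∈ V := by
  set A : StarSubalgebra ℂ C(OnePoint ℝ, ℂ) :=
    StarAlgebra.adjoin ℂ {ext' (res Complex.I (by simp))} with hA
  have hsep : A.SeparatesPoints := by
    intro x y hxy
    exact ⟨_, ⟨ext' (res Complex.I (by simp)), StarAlgebra.subset_adjoin ℂ _ rfl, rfl⟩,
      fun h => hxy (ext'_res_injective h)⟩
  have htop := ContinuousMap.starSubalgebra_topologicalClosure_eq_top_of_separatesPoints A hsep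
  have hc : IsClosed (V : Set C₀(ℝ,ℂ)) := Submodule.isClosed_topologicalClosure _
  have hfc : f ∈ closure (V : Set C₀(ℝ,ℂ)) := by
    rw [Metric.mem_closure_iff]
    intro ε hε
    have hf : ext' f ∈ closure (A : Set C(OnePoint ℝ, ℂ)) := by
      have : ext' f ∈ A.topologicalClosure := htop ▸ trivial
      exact this
    rw [Metric.mem_closure_iff] at hf
    obtain ⟨a, haA, hdist⟩ := hf (ε/2) (by positivity)
    refine ⟨Rmap a, rmem a haA, ?_⟩
    rw [dist_eq_norm] at hdist ⊢
    have hb : ‖f - Rmap a‖ ≤ ‖ext' f - a‖ + ‖ext' f - a‖ := by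
      rw [← ZeroAtInftyContinuousMap.norm_toBCF_eq_norm]
      refine (BoundedContinuousFunction.norm_le (by positivity)).2 fun x => ?_
      show ‖f x - (a x - a ∞)‖ ≤ _
      have heq : f x - ((a x : ℂ) - a ∞) = ((ext' f - a) (x : OnePoint ℝ)) - ((ext' f - a) ∞) := by
        simp
        ring
      rw [heq]
      refine (norm_sub_le _ _).trans ?_
      gcongr
      · exact (ext' f - a).norm_coe_le_norm _
      · exact (ext' f - a).norm_coe_le_norm _
    calc ‖f - Rmap a‖ ≤ ‖ext' f - a‖ + ‖ext' f - a‖ := hb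
      _ < ε := by linarith
  rwa [hc.closure_eq] at hfc

end Stmt13Aux

open Stmt13Aux in
theorem stmt13 :
    Dense (↑(Submodule.span ℂ
      {g : C₀(ℝ, ℂ) | ∃ ω : ℂ, ω.im ≠ 0 ∧ ∀ x : ℝ, g x = ((x : ℂ) - ω)⁻¹}) :
        Set C₀(ℝ, ℂ)) := by
  rw [dense_iff_closure_eq]
  have h1 : closure (↑(Submodule.span ℂ SS) : Set C₀(ℝ, ℂ)) = (V : Set C₀(ℝ, ℂ)) :=
    (Submodule.topologicalClosure_coe _).symm
  rw [show ({g : C₀(ℝ, ℂ) | ∃ ω : ℂ, ω.im ≠ 0 ∧ ∀ x : ℝ, g x = ((x : ℂ) - ω)⁻¹}) = SS from rfl,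
    h1]
  exact Set.eq_univ_iff_forall.mpr all_mem_V
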